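/- If x has s runs with final run of length j, and y has t runs with final run of length k, then dtw(x, y) = min(SP(x, y, s, t, k), SP(y, x, t, s, j)). -/

import Mathlib

open scoped BigOperators

variable {α : Type*}

/-- `xb` is the expansion of `x` obtained by replacing the `i`-th letter of `x`
with `ks[i] ≥ 1` consecutive copies of itself (equivalently, by extending runs). -/
def IsExpansionWith (x : List α) (ks : List ℕ) (xb : List α) : Prop :=
  ks.length = x.length ∧ (∀ k ∈ ks, 1 ≤ k) ∧
    xb = (x.zip ks).flatMap fun p => List.replicate p.2 p.1

/-- `xb` is an expansion of `x` (obtained by extending runs). -/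
def IsExpansion (x xb : List α) : Prop := ∃ ks, IsExpansionWith x ks xb

/-- The cost of a correspondence: sum of pointwise distances. -/
def corrCost (d : α → α → ℝ) (xb yb : List α) : ℝ :=
  ((xb.zip yb).map fun p => d p.1 p.2).sum

/-- A correspondence between `x` and `y`: a pair of equal-length expansions. -/
def IsCorrespondence (x y xb yb : List α) : Prop :=
  IsExpansion x xb ∧ IsExpansion y yb ∧ xb.length = yb.length

/-- Dynamic time warping distance: minimum cost of a correspondence. -/
noncomputable def dtw (d : α → α → ℝ) (x y : List α) : ℝ :=
  sInf {c | ∃ xb yb, IsCorrespondence x y xb yb ∧ c = corrCost d xb yb}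

/-- The maximal runs of equal letters of a list. -/
def runsOf [DecidableEq α] (x : List α) : List (List α) := x.splitBy (· == ·)

/-- Number of runs. -/
def numRuns [DecidableEq α] (x : List α) : ℕ := (runsOf x).length

/-- Length of the final run. -/
def lastRunLen [DecidableEq α] (x : List α) : ℕ := ((runsOf x).getLastD []).length

/-- Length of the `i`-th run (0-indexed). -/
def runLen [DecidableEq α] (x : List α) (i : ℕ) : ℕ := ((runsOf x).getD i []).length

/-- The letter populating the `i`-th run (0-indexed). -/
def runLetter [DecidableEq α] [Inhabited α] (x : List α) (i : ℕ) : α :=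
  ((runsOf x).getD i []).headI

/-- The concatenation of the first `k` runs of `x`. -/
def firstRuns [DecidableEq α] (k : ℕ) (x : List α) : List α := ((runsOf x).take k).flatten

/-- The prefix of `y` consisting of its first `ry` runs, up through the `oy`-th
letter of the `ry`-th run (runs are 1-indexed here). -/
def runPrefix [DecidableEq α] (ry oy : ℕ) (y : List α) : List α :=
  firstRuns (ry - 1) y ++ ((runsOf y).getD (ry - 1) []).take oy

/-- The subproblem `SP(x, y, rx, ry, oy)`: the minimum cost of a correspondence
between the first `rx` runs of `x` and the prefix of `y` ending at the `oy`-th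
letter of its `ry`-th run, under the constraint that the final (`ry`-th) run of
the `y`-prefix is not extended; `⊤` if no such correspondence exists. -/
noncomputable def SP [DecidableEq α] (d : α → α → ℝ) (x y : List α) (rx ry oy : ℕ) : EReal :=
  sInf ((fun p : List α × List α => ((corrCost d p.1 p.2 : ℝ) : EReal)) ''
    {p | IsCorrespondence (firstRuns rx x) (runPrefix ry oy y) p.1 p.2 ∧
         (0 < oy → lastRunLen p.2 = oy)})

/-- Generalized edit distance over a metric with null character `nul`:
insertion/deletion of `l` costs `d nul l`, substitution of `l` by `l'` costs `d l l'`. -/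
noncomputable def ged (d : α → α → ℝ) (nul : α) : List α → List α → ℝ
  | [], [] => 0
  | [], b :: ys => d nul b + ged d nul [] ys
  | a :: xs, [] => d nul a + ged d nul xs []
  | a :: xs, b :: ys =>
      min (d a b + ged d nul xs ys)
        (min (d nul a + ged d nul xs (b :: ys)) (d nul b + ged d nul (a :: xs) ys))
  termination_by x y => x.length + y.length

/-- Simple (Hamming/Levenshtein) edit distance: unit-cost insertions, deletions
and substitutions. -/
def edH [DecidableEq α] : List α → List α → ℕ
  | [], ys => ys.length
  | xs, [] => xs.length
  | a :: xs, b :: ys =>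
      min ((if a = b then 0 else 1) + edH xs ys)
        (min (1 + edH xs (b :: ys)) (1 + edH (a :: xs) ys))
  termination_by x y => x.length + y.length

/-- Simple edit distance with only unit-cost insertions and deletions. -/
def edS [DecidableEq α] : List α → List α → ℕ
  | [], ys => ys.length
  | xs, [] => xs.length
  | a :: xs, b :: ys =>
      if a = b then
        min (edS xs ys) (min (1 + edS xs (b :: ys)) (1 + edS (a :: xs) ys))
      else
        min (1 + edS xs (b :: ys)) (1 + edS (a :: xs) ys)
  termination_by x y => x.length + y.length

/-- The padded string `p(x) = ∅ x₁ ∅ x₂ ∅ ⋯ xₙ ∅`. -/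
def pad (nul : α) (x : List α) : List α := nul :: x.flatMap fun a => [a, nul]

/-- The `r`-simplification for edit distance: remove all letters of magnitude at most `r`. -/
noncomputable def sEd [MetricSpace α] (nul : α) (r : ℝ) (x : List α) : List α :=
  x.filter fun l => decide (r < dist nul l)

set_option linter.unusedSectionVars false
set_option linter.unusedTactic false
section Aux
-- expansion basics
theorem expansion_nil {xb : List α} (h : IsExpansion [] xb) : xb = [] := by
  obtain ⟨ks, -, -, h3⟩ := h; simpa using h3

theorem expansion_length {x ks xb : List α} : True := trivial

theorem length_expansionWith {x : List α} {ks xb} (h : IsExpansionWith x ks xb) :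
    xb.length = ks.sum := by
  obtain ⟨h1, -, h3⟩ := h
  subst h3
  induction x generalizing ks with
  | nil => have := h1; simp at this; simp [this]
  | cons a x IH =>
    cases ks with
    | nil => simp at h1
    | cons k ks => simp [List.sum_cons, IH (by simpa using h1)]

theorem sum_ge_length {ks : List ℕ} (h : ∀ k ∈ ks, 1 ≤ k) : ks.length ≤ ks.sum := by
  induction ks with
  | nil => simp
  | cons k ks IH =>
    simp only [List.length_cons, List.sum_cons]
    have := h k (by simp)
    have := IH (fun k hk => h k (by simp [hk]))
    omega

theorem getLast?_expansion {x xb : List α} (h : IsExpansion x xb) :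
    xb.getLast? = x.getLast? := by
  obtain ⟨ks, h1, h2, h3⟩ := h
  subst h3
  induction x generalizing ks with
  | nil => simp
  | cons a x IH =>
    cases ks with
    | nil => simp at h1
    | cons k ks =>
      rw [List.zip_cons_cons, List.flatMap_cons, List.getLast?_append]
      rcases List.eq_nil_or_concat x with rfl | ⟨x', b, rfl⟩
      · have hks : ks = [] := by simpa using h1
        subst hks
        have hk : k ≠ 0 := by have := h2 k (by simp); omega
        simp [List.getLast?_replicate, hk]
      · rw [IH ks (by simpa using h1) (fun j hj => h2 j (by simp [hj]))]
        simp only [List.concat_eq_append, List.getLast?_concat, Option.or]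
        rw [show a :: (x' ++ [b]) = (a :: x') ++ [b] by simp, List.getLast?_concat]

theorem expansion_append {u v ub vb : List α} (hu : IsExpansion u ub) (hv : IsExpansion v vb) :
    IsExpansion (u ++ v) (ub ++ vb) := by
  obtain ⟨ks, hk1, hk2, hk3⟩ := hu
  obtain ⟨ls, hl1, hl2, hl3⟩ := hv
  refine ⟨ks ++ ls, by simp [hk1, hl1], ?_, ?_⟩
  · intro k hk; rcases List.mem_append.1 hk with h | h
    · exact hk2 k h
    · exact hl2 k h
  · rw [List.zip_append hk1.symm, List.flatMap_append, hk3, hl3]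

theorem expansion_replicate_eq {a : α} : ∀ (ks : List ℕ) (j : ℕ), ks.length = j →
    ((List.replicate j a).zip ks).flatMap (fun p => List.replicate p.2 p.1) =
      List.replicate ks.sum a
  | [], j, h => by simp [← h]
  | k :: ks, j, h => by
    cases j with
    | zero => simp at h
    | succ j =>
      rw [List.replicate_succ, List.zip_cons_cons, List.flatMap_cons,
        expansion_replicate_eq ks j (by simpa using h), List.sum_cons,
        ← List.replicate_add]

theorem replicate_expansion {a : α} {j S : ℕ} (hj : j ≠ 0) (hS : j ≤ S) :
    IsExpansion (List.replicate j a) (List.replicate S a) := by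
  refine ⟨(S - (j - 1)) :: List.replicate (j - 1) 1, by simp; omega, ?_, ?_⟩
  · intro k hk
    rcases List.mem_cons.1 hk with rfl | h
    · omega
    · simp at h; omega
  · rw [show j = (j - 1) + 1 by omega] at *
    rw [expansion_replicate_eq _ _ (by simp)]
    congr 1
    simp [List.sum_replicate]
    omega

section SplitByAux
open List
variable [DecidableEq α]
set_option linter.unusedTactic false
omit [DecidableEq α] in
theorem myloop_eq_append {r : α → α → Bool} {l : List α} {a : α} {g : List α}
    (gs : List (List α)) : splitBy.loop r l a g gs = gs.reverse ++ splitBy.loop r l a g [] := by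
  induction l generalizing a g gs with
  | nil => simp [splitBy.loop]
  | cons b l IH =>
    simp_rw [splitBy.loop]
    split <;> rw [IH]
    conv_rhs => rw [IH]
    simp

theorem myloop_const (l : List α) (a : α) (g : List α) (hg : ∀ b ∈ g, b = a) :
    splitBy.loop (· == ·) l a g [] =
      (g.reverse ++ a :: l.takeWhile (· == a)) :: splitBy (· == ·) (l.dropWhile (· == a)) := by
  induction l generalizing g with
  | nil => simp [splitBy.loop]
  | cons b l IH =>
    rw [splitBy.loop]
    by_cases hb : b = a
    · subst hb
      rw [show (b == b) = true by simp]
      rw [IH (b :: g) (by simpa using hg)]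
      simp [takeWhile_cons, dropWhile_cons]
    · rw [show (a == b) = false by simpa using fun h => hb h.symm]
      rw [myloop_eq_append]
      rw [takeWhile_cons, dropWhile_cons]
      simp only [beq_iff_eq, hb, if_false]
      simp only [reverse_cons, reverse_nil, nil_append, singleton_append]
      congr 1
      rw [myloop_eq_append]
      simp only [reverse_cons, reverse_nil, nil_append, singleton_append]
      rfl

theorem splitBy_cons_eq (a : α) (l : List α) :
    splitBy (· == ·) (a :: l) =
      (a :: l.takeWhile (· == a)) :: splitBy (· == ·) (l.dropWhile (· == a)) := by
  rw [splitBy, myloop_const l a [] (by simp)]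
  rfl

theorem splitBy_replicate (a : α) (n : ℕ) (hn : n ≠ 0) :
    splitBy (· == ·) (List.replicate n a) = [List.replicate n a] := by
  obtain ⟨m, rfl⟩ := Nat.exists_eq_succ_of_ne_zero hn
  rw [replicate_succ, splitBy_cons_eq, takeWhile_replicate, dropWhile_replicate]
  simp

theorem splitBy_append_replicate (a : α) (n : ℕ) (hn : n ≠ 0) :
    ∀ w : List α, w.getLast? ≠ some a →
    splitBy (· == ·) (w ++ List.replicate n a) = splitBy (· == ·) w ++ [List.replicate n a]
  | [], _ => by simpa using splitBy_replicate a n hn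
  | b :: w', hw => by
    by_cases hall : ∀ c ∈ w', c = b
    · have hba : b ≠ a := by
        intro h; apply hw
        cases w' using List.reverseRecOn with
        | nil => simp [h]
        | append_singleton w'' c =>
          have hc : c = b := hall c (by simp)
          rw [show b :: (w'' ++ [c]) = (b :: w'') ++ [c] by simp, getLast?_concat, hc, h]
      have hbeq : (a == b) = false := beq_eq_false_iff_ne.2 (Ne.symm hba)
      rw [cons_append, splitBy_cons_eq,
        takeWhile_append_of_pos (by simpa using hall),
        dropWhile_append_of_pos (by simpa using hall),
        takeWhile_replicate, dropWhile_replicate]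
      rw [splitBy_cons_eq, takeWhile_eq_self_iff.2 (by simpa using hall),
        dropWhile_eq_nil_iff.2 (by simpa using hall)]
      simp [hbeq, splitBy_replicate a n hn]
    · have hdne : dropWhile (· == b) w' ≠ [] := by
        intro h
        exact hall fun c hc => by simpa using dropWhile_eq_nil_iff.1 h c hc
      have htlt : (takeWhile (· == b) w').length ≠ w'.length := by
        intro h
        have := (List.takeWhile_prefix (l := w') (p := (· == b))).sublist.eq_of_length h
        exact hall fun c hc => by simpa using takeWhile_eq_self_iff.1 this c hc
      have h3 : (b :: w').getLast? = (dropWhile (· == b) w').getLast? := by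
        conv_lhs => rw [show b :: w' = (b :: takeWhile (· == b) w') ++ dropWhile (· == b) w' by
          rw [cons_append, takeWhile_append_dropWhile]]
        rw [getLast?_append]
        cases hd : (dropWhile (· == b) w').getLast? with
        | none => exact absurd (getLast?_eq_none_iff.1 hd) hdne
        | some c => rfl
      have hlast : (dropWhile (· == b) w').getLast? ≠ some a := h3 ▸ hw
      rw [cons_append, splitBy_cons_eq, takeWhile_append, if_neg htlt,
        dropWhile_append, if_neg (by simpa using hdne),
        splitBy_append_replicate a n hn _ hlast,
        splitBy_cons_eq]
      simp
termination_by w => w.length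
decreasing_by
  simp only [length_cons]
  exact Nat.lt_succ_of_le (dropWhile_sublist (· == b)).length_le

end SplitByAux

section Decomp
open List
variable [DecidableEq α]

theorem chain'_const : ∀ {g : List α}, g.Chain' (fun x y => x == y) →
    g = [] ∨ ∃ a, g = List.replicate g.length a
  | [], _ => Or.inl rfl
  | [a], _ => Or.inr ⟨a, rfl⟩
  | a :: b :: t, h => by
    replace h := (isChain_cons_cons (R := fun x y => (x == y) = true)).1 h
    obtain ⟨hab, ht⟩ := h
    have hab' : a = b := by simpa using hab
    rcases chain'_const ht with h' | ⟨c, hc⟩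
    · simp at h'
    · refine Or.inr ⟨c, ?_⟩
      have hbc : b = c := by
        have h2 := congrArg List.head? hc
        rw [length_cons, replicate_succ, head?_cons, head?_cons] at h2
        exact Option.some.inj h2
      rw [length_cons, replicate_succ, ← hc, hab', hbc]

theorem runsOf_ne_nil {l : List α} (hl : l ≠ []) : runsOf l ≠ [] := by
  intro h
  apply hl
  have := List.flatten_splitBy (· == ·) l
  rw [show l.splitBy (· == ·) = runsOf l from rfl, h] at this
  simpa using this.symm

theorem lastRunLen_append_replicate {w : List α} {a : α} {n : ℕ} (hn : n ≠ 0)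
    (hw : w.getLast? ≠ some a) : lastRunLen (w ++ List.replicate n a) = n := by
  unfold lastRunLen runsOf
  rw [splitBy_append_replicate a n hn w hw]
  simp

theorem exists_decomp (l : List α) (hl : l ≠ []) :
    ∃ w a, l = w ++ List.replicate (lastRunLen l) a ∧ lastRunLen l ≠ 0 ∧
      w.getLast? ≠ some a := by
  have hL : runsOf l ≠ [] := runsOf_ne_nil hl
  set L := runsOf l with hLdef
  set g := L.getLast hL with hg
  have hmem : g ∈ L := getLast_mem hL
  have hgne : g ≠ [] := List.ne_nil_of_mem_splitBy hmem
  obtain ⟨a, hgc⟩ : ∃ a, g = List.replicate g.length a :=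
    (chain'_const (List.isChain_of_mem_splitBy hmem)).resolve_left hgne
  have hsplit : L.dropLast ++ [g] = L := dropLast_concat_getLast hL
  have hflat : L.dropLast.flatten ++ g = l := by
    have : L.flatten = l := List.flatten_splitBy _ l
    rw [← this, ← hsplit]
    simp
  have hlen : lastRunLen l = g.length := by
    unfold lastRunLen
    rw [← hLdef, getLastD_eq_getLast?, getLast?_eq_getLast (l := L) hL]
    rfl
  have hheadq : g.head? = some a := by
    conv_lhs => rw [hgc]
    cases hgl : g.length with
    | zero => exact absurd (by simpa [hgl] using hgc) hgne
    | succ m => rw [replicate_succ, head?_cons]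
  have hhead : ∀ hb : g ≠ [], g.head hb = a := fun hb =>
    Option.some.inj ((List.head?_eq_head hb).symm.trans hheadq)
  refine ⟨L.dropLast.flatten, a, ?_, ?_, ?_⟩
  · rw [hlen, ← hgc, hflat]
  · rw [hlen]; simpa using hgne
  · rcases eq_or_ne L.dropLast [] with hM | hM
    · simp [hM]
    · obtain ⟨M', gl, hM'⟩ := List.eq_nil_or_concat L.dropLast |>.resolve_left hM
      have hglmem : gl ∈ L := mem_of_mem_dropLast (by rw [hM']; simp)
      have hglne : gl ≠ [] := List.ne_nil_of_mem_splitBy hglmem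
      have hchain := List.isChain_getLast_head_splitBy (· == ·) l
      rw [show l.splitBy (· == ·) = L from rfl, ← hsplit, hM', concat_eq_append] at hchain
      have hrel := (List.isChain_append.1 hchain).2.2
      obtain ⟨ha, hb, hfalse⟩ := hrel gl (by simp) g (by simp)
      have hne : gl.getLast ha ≠ a := by
        rw [← hhead hb]
        simpa using hfalse
      rw [hM', concat_eq_append, flatten_append, flatten_cons, flatten_nil, append_nil,
        getLast?_append, getLast?_eq_getLast (l := gl) hglne, Option.some_or]
      simpa using hne
end Decomp

section Structure
open List
variable [DecidableEq α]

theorem expansion_structure {x xb : List α} (hx : x ≠ []) (h : IsExpansion x xb) :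
    ∃ w a wb S, x = w ++ List.replicate (lastRunLen x) a ∧
      xb = wb ++ List.replicate S a ∧ IsExpansion w wb ∧
      lastRunLen x ≤ S ∧ lastRunLen x ≠ 0 ∧ wb.getLast? ≠ some a ∧
      lastRunLen xb = S := by
  obtain ⟨w, a, hxeq, hj0, hwa⟩ := exists_decomp x hx
  obtain ⟨ks, hk1, hk2, hk3⟩ := h
  set j := lastRunLen x with hjdef
  have hlen : ks.length = w.length + j := by rw [hk1, hxeq]; simp
  set ksw := ks.take w.length with hkswdef
  set ksr := ks.drop w.length with hksrdef
  have hlw : ksw.length = w.length := by rw [hkswdef, length_take]; omega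
  have hlr : ksr.length = j := by rw [hksrdef, length_drop]; omega
  have hzip : x.zip ks = w.zip ksw ++ (List.replicate j a).zip ksr := by
    conv_lhs => rw [hxeq, ← List.take_append_drop w.length ks]
    exact List.zip_append hlw.symm
  set wb := (w.zip ksw).flatMap (fun p => List.replicate p.2 p.1) with hwbdef
  have hwexp : IsExpansionWith w ksw wb :=
    ⟨hlw, fun k hk => hk2 k (List.mem_of_mem_take hk), rfl⟩
  have hxb : xb = wb ++ List.replicate ksr.sum a := by
    rw [hk3, hzip, List.flatMap_append, hwbdef, expansion_replicate_eq ksr j hlr]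
  have hjS : j ≤ ksr.sum := hlr ▸ sum_ge_length (fun k hk => hk2 k (List.mem_of_mem_drop hk))
  have hwbne : wb.getLast? ≠ some a := by
    rw [getLast?_expansion ⟨ksw, hwexp⟩]
    exact hwa
  refine ⟨w, a, wb, ksr.sum, hxeq, hxb, ⟨ksw, hwexp⟩, hjS, hj0, hwbne, ?_⟩
  rw [hxb]
  exact lastRunLen_append_replicate (by omega) hwbne

theorem lastRunLen_le_expansion {x xb : List α} (hx : x ≠ []) (h : IsExpansion x xb) :
    lastRunLen x ≤ lastRunLen xb := by
  obtain ⟨w, a, wb, S, -, -, -, hS, -, -, hlast⟩ := expansion_structure hx h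
  omega

theorem dropLast_expansion {x xb : List α} (hx : x ≠ []) (h : IsExpansion x xb)
    (hgt : lastRunLen x < lastRunLen xb) : IsExpansion x xb.dropLast := by
  obtain ⟨w, a, wb, S, hxeq, hxbeq, hwexp, hS, hj0, hwb, hlast⟩ := expansion_structure hx h
  have hS1 : lastRunLen x ≤ S - 1 := by omega
  have hdrop : xb.dropLast = wb ++ List.replicate (S - 1) a := by
    rw [hxbeq, dropLast_append_of_ne_nil (l' := wb) (by simp [← hlast]; omega), dropLast_replicate]
  rw [hdrop, hxeq]
  exact expansion_append hwexp (replicate_expansion hj0 hS1)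

theorem expansion_ne_nil {x xb : List α} (hx : x ≠ []) (h : IsExpansion x xb) : xb ≠ [] := by
  intro hnil
  obtain ⟨ks, hk⟩ := h
  have h1 := length_expansionWith hk
  have h2 := sum_ge_length hk.2.1
  rw [hnil] at h1
  have := hk.1
  simp at h1
  rcases x with _ | ⟨b, x⟩
  · exact hx rfl
  · rcases ks with _ | ⟨k, ks⟩
    · simp at this
    · simp [List.sum_cons] at h1
      have := hk.2.1 k (by simp)
      omega
end Structure

section Cost
open List
variable [MetricSpace α]

theorem corrCost_nonneg (xb yb : List α) : 0 ≤ corrCost dist xb yb :=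
  List.sum_nonneg fun r hr => by
    obtain ⟨p, -, rfl⟩ := List.mem_map.1 hr
    exact dist_nonneg

theorem corrCost_dropLast_le {xb yb : List α} (hne : xb ≠ []) (hne' : yb ≠ [])
    (hlen : xb.length = yb.length) :
    corrCost dist xb.dropLast yb.dropLast ≤ corrCost dist xb yb := by
  have h1 : xb.dropLast.length = yb.dropLast.length := by simp [hlen]
  have heq : corrCost dist xb yb =
      corrCost dist xb.dropLast yb.dropLast + dist (xb.getLast hne) (yb.getLast hne') := by
    conv_lhs => rw [← dropLast_concat_getLast hne, ← dropLast_concat_getLast hne']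
    unfold corrCost
    rw [List.zip_append h1, List.map_append, List.sum_append]
    simp
  rw [heq]
  have := dist_nonneg (x := xb.getLast hne) (y := yb.getLast hne')
  linarith

theorem corrCost_comm (xb yb : List α) : corrCost dist xb yb = corrCost dist yb xb := by
  unfold corrCost
  rw [← List.zip_swap yb xb, List.map_map]
  simp [Function.comp_def, dist_comm]
end Cost

section Exchange
open List
variable [MetricSpace α] [DecidableEq α]

theorem exchange {x y : List α} (hx : x ≠ []) (hy : y ≠ []) :
    ∀ xb yb, IsCorrespondence x y xb yb →
    ∃ xb' yb', IsCorrespondence x y xb' yb' ∧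
      corrCost dist xb' yb' ≤ corrCost dist xb yb ∧
      (lastRunLen xb' = lastRunLen x ∨ lastRunLen yb' = lastRunLen y)
  | xb, yb, hc => by
    by_cases h1 : lastRunLen xb = lastRunLen x
    · exact ⟨xb, yb, hc, le_refl _, Or.inl h1⟩
    by_cases h2 : lastRunLen yb = lastRunLen y
    · exact ⟨xb, yb, hc, le_refl _, Or.inr h2⟩
    obtain ⟨hex, hey, hlen⟩ := hc
    have hxgt : lastRunLen x < lastRunLen xb :=
      lt_of_le_of_ne (lastRunLen_le_expansion hx hex) (Ne.symm h1)
    have hygt : lastRunLen y < lastRunLen yb :=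
      lt_of_le_of_ne (lastRunLen_le_expansion hy hey) (Ne.symm h2)
    have hxbne := expansion_ne_nil hx hex
    have hybne := expansion_ne_nil hy hey
    have hpos : 0 < xb.length := List.length_pos_iff.2 hxbne
    have hlen' : xb.dropLast.length = yb.dropLast.length := by simp [hlen]
    obtain ⟨xb', yb', hc', hcost', hor⟩ := exchange hx hy xb.dropLast yb.dropLast
      ⟨dropLast_expansion hx hex hxgt, dropLast_expansion hy hey hygt, hlen'⟩
    exact ⟨xb', yb', hc', le_trans hcost' (corrCost_dropLast_le hxbne hybne hlen), hor⟩
termination_by xb => xb.length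
decreasing_by
  simp only [List.length_dropLast]
  omega
end Exchange

section Prefixes
open List
variable [DecidableEq α]

theorem firstRuns_numRuns (x : List α) : firstRuns (numRuns x) x = x := by
  unfold firstRuns numRuns
  rw [List.take_length]
  exact List.flatten_splitBy _ x

theorem runPrefix_full (y : List α) (hy : y ≠ []) :
    runPrefix (numRuns y) (lastRunLen y) y = y := by
  have hL := runsOf_ne_nil hy
  have h2 : (runsOf y).getLastD [] = (runsOf y).getLast hL := by
    rw [getLastD_eq_getLast?, getLast?_eq_getLast hL]; rfl
  have hgetD : (runsOf y).getD ((runsOf y).length - 1) [] = (runsOf y).getLast hL := by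
    rw [List.getD_eq_getElem?_getD, ← List.getLast?_eq_getElem?, getLast?_eq_getLast hL]; rfl
  unfold runPrefix firstRuns numRuns lastRunLen
  rw [← List.dropLast_eq_take, hgetD, h2, List.take_length]
  have h3 := congrArg List.flatten (dropLast_concat_getLast hL)
  rw [flatten_append, flatten_cons, flatten_nil, append_nil] at h3
  rw [h3]
  exact List.flatten_splitBy _ y
end Prefixes

theorem exists_correspondence (x y : List α) (hx : x ≠ []) (hy : y ≠ []) :
    ∃ xb yb, IsCorrespondence x y xb yb := by
  have hxl : 1 ≤ y.length := List.length_pos_iff.2 hy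
  have hyl : 1 ≤ x.length := List.length_pos_iff.2 hx
  refine ⟨_, _, ⟨⟨List.replicate x.length y.length, by simp, ?_, rfl⟩,
    ⟨List.replicate y.length x.length, by simp, ?_, rfl⟩, ?_⟩⟩
  · intro k hk; rw [List.eq_of_mem_replicate hk]; exact hxl
  · intro k hk; rw [List.eq_of_mem_replicate hk]; exact hyl
  · rw [length_expansionWith ⟨by simp, fun k hk => by rw [List.eq_of_mem_replicate hk]; exact hxl, rfl⟩,
      length_expansionWith ⟨by simp, fun k hk => by rw [List.eq_of_mem_replicate hk]; exact hyl, rfl⟩]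
    simp [List.sum_replicate]
    ring


end Aux

/-- If `x` has `s` runs with final run of length `j` and `y` has `t` runs with
final run of length `k`, then `dtw(x, y) = min(SP(x, y, s, t, k), SP(y, x, t, s, j))`. -/
theorem stmt17 [MetricSpace α] [DecidableEq α] (x y : List α)
    (hx : x ≠ []) (hy : y ≠ []) (s t j k : ℕ)
    (hs : numRuns x = s) (ht : numRuns y = t)
    (hj : lastRunLen x = j) (hk : lastRunLen y = k) :
    ((dtw dist x y : ℝ) : EReal) = min (SP dist x y s t k) (SP dist y x t s j) := by
  subst hs ht hj hk
  have hfrx := firstRuns_numRuns x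
  have hfry := firstRuns_numRuns y
  have hrpx := runPrefix_full x hx
  have hrpy := runPrefix_full y hy
  unfold SP dtw
  rw [hfrx, hfry, hrpx, hrpy]
  set A : Set ℝ := {c | ∃ xb yb, IsCorrespondence x y xb yb ∧ c = corrCost dist xb yb} with hA
  have hAne : A.Nonempty := by
    obtain ⟨xb, yb, hc⟩ := exists_correspondence x y hx hy
    exact ⟨_, xb, yb, hc, rfl⟩
  have hAbdd : BddBelow A := ⟨0, fun c hc => by
    obtain ⟨xb, yb, hc, rfl⟩ := hc
    exact corrCost_nonneg xb yb⟩
  set S1 : EReal := sInf ((fun p : List α × List α => ((corrCost dist p.1 p.2 : ℝ) : EReal)) ''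
    {p | IsCorrespondence x y p.1 p.2 ∧ (0 < lastRunLen y → lastRunLen p.2 = lastRunLen y)}) with hS1
  set S2 : EReal := sInf ((fun p : List α × List α => ((corrCost dist p.1 p.2 : ℝ) : EReal)) ''
    {p | IsCorrespondence y x p.1 p.2 ∧ (0 < lastRunLen x → lastRunLen p.2 = lastRunLen x)}) with hS2
  apply le_antisymm
  · apply le_min
    · rw [hS1]
      apply le_sInf
      rintro e ⟨⟨xb, yb⟩, ⟨hc, -⟩, rfl⟩
      exact EReal.coe_le_coe_iff.2 (csInf_le hAbdd ⟨xb, yb, hc, rfl⟩)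
    · rw [hS2]
      apply le_sInf
      rintro e ⟨⟨yb, xb⟩, ⟨hc, -⟩, rfl⟩
      refine EReal.coe_le_coe_iff.2 ?_
      rw [corrCost_comm]
      exact csInf_le hAbdd ⟨xb, yb, ⟨hc.2.1, hc.1, hc.2.2.symm⟩, rfl⟩
  · have key : ∀ c ∈ A, min S1 S2 ≤ (c : EReal) := by
      rintro c ⟨xb, yb, hc, rfl⟩
      obtain ⟨xb', yb', hc', hcost, hor⟩ := exchange hx hy xb yb hc
      rcases hor with h | h
      · refine le_trans (min_le_right _ _) (le_trans (sInf_le ⟨(yb', xb'),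
          ⟨⟨hc'.2.1, hc'.1, hc'.2.2.symm⟩, fun _ => h⟩, rfl⟩) ?_)
        show ((corrCost dist yb' xb' : ℝ) : EReal) ≤ ((corrCost dist xb yb : ℝ) : EReal)
        rw [corrCost_comm yb' xb']
        exact EReal.coe_le_coe_iff.2 hcost
      · exact le_trans (min_le_left _ _) (le_trans (sInf_le ⟨(xb', yb'),
          ⟨hc', fun _ => h⟩, rfl⟩) (EReal.coe_le_coe_iff.2 hcost))
    obtain ⟨c0, hc0⟩ := hAne
    have htop : min S1 S2 ≠ ⊤ := by
      intro h
      have := key c0 hc0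
      rw [h] at this
      exact (EReal.coe_lt_top c0).not_ge this
    rcases eq_or_ne (min S1 S2) ⊥ with hbot | hbot
    · rw [hbot]; exact bot_le
    obtain ⟨b, hb⟩ : ∃ b : ℝ, min S1 S2 = (b : EReal) := by
      lift (min S1 S2) to ℝ using ⟨htop, hbot⟩ with b hbm
      exact ⟨b, rfl⟩
    rw [hb]
    refine EReal.coe_le_coe_iff.2 (le_csInf ⟨c0, hc0⟩ fun c hc => ?_)
    exact EReal.coe_le_coe_iff.1 (hb ▸ key c hc)
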